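/- Let λ = (λ₁ ≥ λ₂ ≥ ⋯ ≥ λ_d ≥ 0) be an integer partition with at most d parts and let n = λ₁ + ⋯ + λ_d. Then the number of standard Young tableaux of shape λ satisfies f^λ = n! · det( 1/(λ_i − i + j)! )_{1≤i,j≤d}, where the determinant is over ℚ and 1/m! is interpreted as 0 when m < 0. -/

import Mathlib

open scoped BigOperators

/-- A function `ℕ → ℕ` represents an integer partition if it is weakly decreasing and
eventually zero (the value at `i` is the length of row `i` of the Young diagram). -/
def IsPartFun (f : ℕ → ℕ) : Prop :=
  (∀ i j : ℕ, i ≤ j → f j ≤ f i) ∧ ∃ N, ∀ i, N ≤ i → f i = 0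

/-- The Young diagram of `g` is obtained from that of `f` by adding exactly one square. -/
def AddBox (f g : ℕ → ℕ) : Prop :=
  ∃ i, g = Function.update f i (f i + 1)

/-- `f^μ`: the number of standard Young tableaux of shape `μ`, i.e. of chains
`∅ = ν⁰ ⊂ ν¹ ⊂ ⋯ ⊂ ν^m = μ` of Young diagrams each obtained from the previous one
by adding one square (here `m = |μ|`). -/
noncomputable def sytCount (m : ℕ) (mu : ℕ → ℕ) : ℕ :=
  Nat.card {T : Fin (m + 1) → ℕ → ℕ //
    (∀ k, IsPartFun (T k)) ∧ T 0 = (fun _ => 0) ∧ T (Fin.last m) = mu ∧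
    ∀ k : Fin m, AddBox (T k.castSucc) (T k.succ)}

/-- `1/m!` for an integer `m`, interpreted as `0` when `m < 0`. -/
noncomputable def invFact (m : ℤ) : ℚ :=
  if 0 ≤ m then (1 : ℚ) / m.toNat.factorial else 0

lemma invFact_pred (m : ℤ) : invFact (m - 1) = m * invFact m := by
  unfold invFact
  rcases lt_trichotomy m 0 with h | h | h
  · rw [if_neg (by omega), if_neg (by omega), mul_zero]
  · subst h; norm_num
  · rw [if_pos (by omega), if_pos (by omega)]
    have h1 : m.toNat = (m - 1).toNat + 1 := by omega
    rw [h1, Nat.factorial_succ]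
    have h2 : ((m - 1).toNat.factorial : ℚ) ≠ 0 := Nat.cast_ne_zero.mpr (Nat.factorial_ne_zero _)
    have h3 : ((m - 1).toNat + 1 : ℚ) ≠ 0 := by positivity
    have h5 : ((m - 1).toNat : ℤ) = m - 1 := Int.toNat_of_nonneg (by omega)
    have h4 : (m : ℚ) = ((m - 1).toNat + 1 : ℚ) := by
      have : ((m - 1).toNat + 1 : ℤ) = m := by omega
      exact_mod_cast (congrArg (fun z : ℤ => (z : ℚ)) this).symm
    rw [h4]
    push_cast
    field_simp

section Det

variable {d : ℕ}

/-- The matrix `invFact (lam i - i + j)`. -/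
noncomputable def hlMat (lam : Fin d → ℕ) : Matrix (Fin d) (Fin d) ℚ :=
  Matrix.of fun i j : Fin d => invFact ((lam i : ℤ) - (i : ℤ) + (j : ℤ))

lemma sum_det_update (lam : Fin d → ℕ) :
    ∑ r : Fin d, ((hlMat lam).updateRow r
        (fun j : Fin d => invFact ((lam r : ℤ) - 1 - (r : ℤ) + (j : ℤ)))).det =
      (∑ i, (lam i : ℚ)) * (hlMat lam).det := by
  have key : ∀ (r : Fin d) (σ : Equiv.Perm (Fin d)),
      (∏ i, ((hlMat lam).updateRow r
        (fun j : Fin d => invFact ((lam r : ℤ) - 1 - (r : ℤ) + (j : ℤ)))) (σ i) i) =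
      ((lam r : ℚ) - (r : ℚ) + ((σ⁻¹ r : Fin d) : ℚ)) * ∏ i, (hlMat lam) (σ i) i := by
    intro r σ
    have : ∀ i : Fin d, ((hlMat lam).updateRow r
        (fun j : Fin d => invFact ((lam r : ℤ) - 1 - (r : ℤ) + (j : ℤ)))) (σ i) i =
        (if i = σ⁻¹ r then ((lam r : ℚ) - (r : ℚ) + (i : ℚ)) else 1) * (hlMat lam) (σ i) i := by
      intro i
      rw [Matrix.updateRow_apply]
      by_cases h : σ i = r
      · have hi : i = σ⁻¹ r := by rw [← h]; simp
        rw [if_pos h, if_pos hi]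
        have hm : (lam r : ℤ) - 1 - (r : ℤ) + (i : ℤ) = ((lam r : ℤ) - (r : ℤ) + (i : ℤ)) - 1 := by ring
        rw [hm, invFact_pred]
        have : (((lam r : ℤ) - (r : ℤ) + (i : ℤ) : ℤ) : ℚ) = (lam r : ℚ) - (r : ℚ) + (i : ℚ) := by
          push_cast; ring
        rw [this, hlMat, Matrix.of_apply, h]
      · have hi : ¬ (i = σ⁻¹ r) := by
          intro hc; apply h; rw [hc]; simp
        rw [if_neg h, if_neg hi, one_mul]
    calc (∏ i, ((hlMat lam).updateRow r
        (fun j : Fin d => invFact ((lam r : ℤ) - 1 - (r : ℤ) + (j : ℤ)))) (σ i) i)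
        = ∏ i, ((if i = σ⁻¹ r then ((lam r : ℚ) - (r : ℚ) + (i : ℚ)) else 1) * (hlMat lam) (σ i) i) := by
          exact Finset.prod_congr rfl (fun i _ => this i)
      _ = (∏ i, (if i = σ⁻¹ r then ((lam r : ℚ) - (r : ℚ) + (i : ℚ)) else 1)) * ∏ i, (hlMat lam) (σ i) i := by
          rw [Finset.prod_mul_distrib]
      _ = ((lam r : ℚ) - (r : ℚ) + ((σ⁻¹ r : Fin d) : ℚ)) * ∏ i, (hlMat lam) (σ i) i := by
          rw [Finset.prod_ite_eq' Finset.univ (σ⁻¹ r)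
            (fun i => ((lam r : ℚ) - (r : ℚ) + (i : ℚ))), if_pos (Finset.mem_univ _)]
  simp only [Matrix.det_apply']
  rw [Finset.sum_comm]
  rw [Finset.mul_sum]
  refine Finset.sum_congr rfl (fun σ _ => ?_)
  simp only [key]
  have hsum : ∑ r : Fin d, ((lam r : ℚ) - (r : ℚ) + ((σ⁻¹ r : Fin d) : ℚ)) = ∑ i, (lam i : ℚ) := by
    rw [Finset.sum_add_distrib, Finset.sum_sub_distrib]
    have : ∑ r : Fin d, (((σ⁻¹ r : Fin d) : ℚ)) = ∑ r : Fin d, ((r : Fin d) : ℚ) := by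
      exact Equiv.sum_comp σ⁻¹ (fun x : Fin d => (x : ℚ))
    rw [this]; ring
  rw [← Finset.mul_sum, ← Finset.sum_mul, hsum]
  ring

end Det

section Chains

/-- The type of standard-Young-tableau chains. -/
def ChainTy (m : ℕ) (mu : ℕ → ℕ) :=
  {T : Fin (m + 1) → ℕ → ℕ //
    (∀ k, IsPartFun (T k)) ∧ T 0 = (fun _ => 0) ∧ T (Fin.last m) = mu ∧
    ∀ k : Fin m, AddBox (T k.castSucc) (T k.succ)}

lemma sytCount_eq (m : ℕ) (mu : ℕ → ℕ) : sytCount m mu = Nat.card (ChainTy m mu) := rfl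

lemma addBox_le {f g : ℕ → ℕ} (h : AddBox f g) : ∀ x, f x ≤ g x := by
  obtain ⟨i, rfl⟩ := h
  intro x
  rw [Function.update_apply]
  split_ifs with h
  · subst h; omega
  · exact le_rfl

lemma chain_le {m : ℕ} {mu : ℕ → ℕ} (T : ChainTy m mu) :
    ∀ (k : Fin (m + 1)) (x : ℕ), T.1 k x ≤ mu x := by
  have key : ∀ (t j : ℕ) (h : j + t = m) (x : ℕ),
      T.1 ⟨j, by omega⟩ x ≤ T.1 (Fin.last m) x := by
    intro t
    induction t with
    | zero =>
      intro j h x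
      have hj : (⟨j, by omega⟩ : Fin (m + 1)) = Fin.last m := by
        apply Fin.ext; simp [Fin.last]; omega
      rw [hj]
    | succ t ih =>
      intro j h x
      have hjm : j < m := by omega
      have h1 : AddBox (T.1 (Fin.castSucc ⟨j, hjm⟩)) (T.1 (Fin.succ ⟨j, hjm⟩)) :=
        T.2.2.2.2 ⟨j, hjm⟩
      have h2 : Fin.castSucc (⟨j, hjm⟩ : Fin m) = (⟨j, by omega⟩ : Fin (m + 1)) := rfl
      have h3 : Fin.succ (⟨j, hjm⟩ : Fin m) = (⟨j + 1, by omega⟩ : Fin (m + 1)) := rfl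
      rw [h2, h3] at h1
      exact le_trans (addBox_le h1 x) (ih (j + 1) (by omega) x)
  intro k x
  have hk : k = ⟨k.1, k.isLt⟩ := rfl
  have := key (m - k.1) k.1 (by omega) x
  rw [T.2.2.2.1] at this
  rw [hk]
  exact this

lemma chainTy_finite (m : ℕ) (mu : ℕ → ℕ) : Finite (ChainTy m mu) := by
  rcases isEmpty_or_nonempty (ChainTy m mu) with h | ⟨⟨T0⟩⟩
  · infer_instance
  · obtain ⟨N, hN⟩ := (T0.2.1 (Fin.last m)).2
    have hmu : ∀ x, N ≤ x → mu x = 0 := by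
      intro x hx; rw [← T0.2.2.2.1]; exact hN x hx
    set B : ℕ := ∑ x ∈ Finset.range N, mu x with hB
    have hle : ∀ x, mu x ≤ B := by
      intro x
      by_cases hx : x < N
      · exact Finset.single_le_sum (f := mu) (fun _ _ => Nat.zero_le _) (Finset.mem_range.mpr hx)
      · rw [hmu x (by omega)]; exact Nat.zero_le _
    apply Finite.of_injective (f := fun (T : ChainTy m mu) (k : Fin (m + 1)) (x : Fin N) =>
      (⟨T.1 k x, by have := chain_le T k x; have := hle (x : ℕ); omega⟩ : Fin (B + 1)))
    intro T S hTS
    apply Subtype.ext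
    funext k x
    by_cases hx : x < N
    · have := congrFun (congrFun hTS k) ⟨x, hx⟩
      simpa using this
    · have h1 := chain_le T k x
      have h2 := chain_le S k x
      rw [hmu x (by omega)] at h1 h2
      omega

lemma isPartFun_zero : IsPartFun (fun _ => 0) :=
  ⟨fun _ _ _ => le_rfl, 0, fun _ _ => rfl⟩

lemma sytCount_zero_zero : sytCount 0 (fun _ => 0) = 1 := by
  rw [sytCount_eq]
  have : Nonempty (ChainTy 0 (fun _ => 0)) :=
    ⟨⟨fun _ _ => 0, fun _ => isPartFun_zero, rfl, rfl, fun k => k.elim0⟩⟩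
  have hsub : Subsingleton (ChainTy 0 (fun _ => 0)) := by
    constructor
    intro T S
    apply Subtype.ext
    funext k
    have hk : k = 0 := Fin.ext (by omega)
    rw [hk, T.2.2.1, S.2.2.1]
  exact Nat.card_eq_one_iff_unique.mpr ⟨hsub, this⟩

/-- The key recurrence: chains of length `m+2` ending at `mu` are in bijection with
pairs of a removable corner and a chain of length `m+1`. -/
lemma sytCount_succ (d m : ℕ) (mu : ℕ → ℕ) (hpart : IsPartFun mu)
    (hsupp : ∀ x, d ≤ x → mu x = 0) :
    sytCount (m + 1) mu =
      ∑ i : Fin d, if mu (i.1 + 1) < mu i.1 then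
        sytCount m (Function.update mu i.1 (mu i.1 - 1)) else 0 := by
  classical
  set p : Fin d → Prop := fun i => mu (i.1 + 1) < mu i.1 with hp
  set C : Fin d → Type := fun i => ChainTy m (Function.update mu i.1 (mu i.1 - 1)) with hC
  -- the backward map
  have hB : ∀ (i : Fin d), p i → ∀ (T' : C i), (∀ k, IsPartFun ((Fin.snoc T'.1 mu : Fin (m+2) → ℕ → ℕ) k)) ∧
      (Fin.snoc T'.1 mu : Fin (m+2) → ℕ → ℕ) 0 = (fun _ => 0) ∧
      (Fin.snoc T'.1 mu : Fin (m+2) → ℕ → ℕ) (Fin.last (m+1)) = mu ∧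
      ∀ k : Fin (m+1), AddBox ((Fin.snoc T'.1 mu : Fin (m+2) → ℕ → ℕ) k.castSucc)
        ((Fin.snoc T'.1 mu : Fin (m+2) → ℕ → ℕ) k.succ) := by
    intro i hi T'
    have hge : 1 ≤ mu i.1 := by have := hi; omega
    refine ⟨?_, ?_, ?_, ?_⟩
    · intro k
      induction k using Fin.lastCases with
      | last => rw [Fin.snoc_last]; exact hpart
      | cast k => rw [Fin.snoc_castSucc]; exact T'.2.1 k
    · have h0 : (0 : Fin (m + 2)) = Fin.castSucc 0 := by simp
      rw [h0, Fin.snoc_castSucc, T'.2.2.1]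
    · rw [Fin.snoc_last]
    · intro k
      induction k using Fin.lastCases with
      | last =>
        rw [Fin.succ_last, Fin.snoc_last, Fin.snoc_castSucc, T'.2.2.2.1]
        refine ⟨i.1, ?_⟩
        funext x
        rw [Function.update_apply]
        by_cases h : x = i.1
        · rw [if_pos h, Function.update_apply, if_pos rfl]
          subst h; omega
        · rw [if_neg h, Function.update_apply, if_neg h]
      | cast k =>
        rw [Fin.succ_castSucc, Fin.snoc_castSucc, Fin.snoc_castSucc]
        exact T'.2.2.2.2 k
  set B : (Σ i : Subtype p, C i.1) → ChainTy (m + 1) mu := fun x =>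
    ⟨Fin.snoc x.2.1 mu, hB x.1.1 x.1.2 x.2⟩ with hBdef
  have hbij : Function.Bijective B := by
    constructor
    · rintro ⟨⟨i, hi⟩, T'⟩ ⟨⟨i', hi'⟩, S'⟩ h
      have h1 : (Fin.snoc T'.1 mu : Fin (m+2) → ℕ → ℕ) = Fin.snoc S'.1 mu :=
        congrArg Subtype.val h
      have h2 : T'.1 = S'.1 := by
        funext k
        have := congrFun h1 k.castSucc
        rwa [Fin.snoc_castSucc, Fin.snoc_castSucc] at this
      have h3 : Function.update mu i.1 (mu i.1 - 1) = Function.update mu i'.1 (mu i'.1 - 1) := by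
        rw [← T'.2.2.2.1, ← S'.2.2.2.1, h2]
      have h4 : i = i' := by
        by_contra hne
        have hne' : i.1 ≠ i'.1 := fun hc => hne (Fin.ext hc)
        have := congrFun h3 i.1
        rw [Function.update_apply, Function.update_apply, if_pos rfl, if_neg hne'] at this
        have : mu i.1 - 1 = mu i.1 := this
        omega
      subst h4
      have h5 : T' = S' := Subtype.ext h2
      rw [h5]
    · rintro ⟨T, hTpart, hT0, hTlast, hTstep⟩
      obtain ⟨j, hj⟩ := by
        have := hTstep (Fin.last m)
        rwa [Fin.succ_last, hTlast] at this
      set f : ℕ → ℕ := T (Fin.castSucc (Fin.last m)) with hf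
      have hmuj : mu j = f j + 1 := by rw [hj]; simp
      have hmux : ∀ x, x ≠ j → mu x = f x := by
        intro x hx; rw [hj, Function.update_apply, if_neg hx]
      have hjd : j < d := by
        by_contra hc
        have := hsupp j (by omega)
        omega
      have hrem : p ⟨j, hjd⟩ := by
        show mu (j + 1) < mu j
        have h1 : mu (j + 1) = f (j + 1) := hmux _ (by omega)
        have h2 : f (j + 1) ≤ f j := (hTpart _).1 j (j + 1) (by omega)
        omega
      have hfeq : f = Function.update mu j (mu j - 1) := by
        funext x
        rw [Function.update_apply]
        split_ifs with h
        · subst h; omega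
        · exact (hmux x h).symm
      refine ⟨⟨⟨⟨j, hjd⟩, hrem⟩, ⟨fun k => T k.castSucc, ?_, ?_, ?_, ?_⟩⟩, ?_⟩
      · intro k; exact hTpart _
      · show T (Fin.castSucc 0) = _
        rw [Fin.castSucc_zero]; exact hT0
      · show T (Fin.castSucc (Fin.last m)) = _
        exact hfeq
      · intro k
        show AddBox (T k.castSucc.castSucc) (T k.succ.castSucc)
        rw [← Fin.succ_castSucc]
        exact hTstep k.castSucc
      · apply Subtype.ext
        show (Fin.snoc (fun k : Fin (m+1) => T k.castSucc) mu : Fin (m+2) → ℕ → ℕ) = T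
        funext k
        induction k using Fin.lastCases with
        | last => rw [Fin.snoc_last, hTlast]
        | cast k => rw [Fin.snoc_castSucc]
  have hfin : ∀ i : Fin d, Finite (C i) := fun i => chainTy_finite _ _
  haveI : ∀ i : Subtype p, Fintype (C i.1) := fun i => @Fintype.ofFinite _ (hfin i.1)
  haveI : Finite (ChainTy (m+1) mu) := chainTy_finite _ _
  rw [sytCount_eq, ← Nat.card_congr (Equiv.ofBijective B hbij)]
  rw [Nat.card_eq_fintype_card, Fintype.card_sigma]
  have step1 : ∀ i : Subtype p, Fintype.card (C i.1) = sytCount m (Function.update mu i.1.1 (mu i.1.1 - 1)) := by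
    intro i
    rw [sytCount_eq, Nat.card_eq_fintype_card]
  rw [Finset.sum_congr rfl (fun i _ => step1 i)]
  rw [← Finset.sum_filter]
  rw [← Finset.sum_subtype (Finset.univ.filter p)
    (fun i => by simp [Finset.mem_filter, hp]) (fun i => sytCount m (Function.update mu i.1 (mu i.1 - 1)))]

end Chains
section Glue

variable {d : ℕ}

def nextPart (lam : Fin d → ℕ) (i : Fin d) : ℕ :=
  if h : i.1 + 1 < d then lam ⟨i.1 + 1, h⟩ else 0

def extFun (lam : Fin d → ℕ) : ℕ → ℕ := fun i => if h : i < d then lam ⟨i, h⟩ else 0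

lemma extFun_coe (lam : Fin d → ℕ) (i : Fin d) : extFun lam i.1 = lam i := by
  unfold extFun
  rw [dif_pos i.isLt]

lemma extFun_succ (lam : Fin d → ℕ) (i : Fin d) : extFun lam (i.1 + 1) = nextPart lam i := rfl

lemma extFun_supp (lam : Fin d → ℕ) : ∀ x, d ≤ x → extFun lam x = 0 := by
  intro x hx; unfold extFun; rw [dif_neg (by omega)]

lemma extFun_isPartFun (lam : Fin d → ℕ) (hanti : ∀ i j : Fin d, i ≤ j → lam j ≤ lam i) :
    IsPartFun (extFun lam) := by
  constructor
  · intro i j hij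
    unfold extFun
    by_cases hj : j < d
    · rw [dif_pos hj, dif_pos (by omega)]
      exact hanti ⟨i, by omega⟩ ⟨j, hj⟩ (by simp [Fin.le_def]; omega)
    · rw [dif_neg hj]; exact Nat.zero_le _
  · exact ⟨d, extFun_supp lam⟩

lemma extFun_update (lam : Fin d → ℕ) (i : Fin d) (h : 1 ≤ lam i) :
    Function.update (extFun lam) i.1 (extFun lam i.1 - 1) =
      extFun (Function.update lam i (lam i - 1)) := by
  funext x
  rw [Function.update_apply]
  by_cases hx : x = i.1
  · subst hx
    rw [if_pos rfl, extFun_coe, extFun_coe]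
    have : (⟨i.1, i.isLt⟩ : Fin d) = i := rfl
    rw [Function.update_apply, if_pos rfl]
  · rw [if_neg hx]
    unfold extFun
    by_cases hxd : x < d
    · rw [dif_pos hxd, dif_pos hxd, Function.update_apply,
        if_neg (fun hc => hx (congrArg Fin.val hc))]
    · rw [dif_neg hxd, dif_neg hxd]

lemma update_anti (lam : Fin d → ℕ) (hanti : ∀ i j : Fin d, i ≤ j → lam j ≤ lam i)
    (i : Fin d) (hrem : nextPart lam i < lam i) :
    ∀ k l : Fin d, k ≤ l → Function.update lam i (lam i - 1) l ≤
      Function.update lam i (lam i - 1) k := by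
  intro k l hkl
  rw [Function.update_apply, Function.update_apply]
  split_ifs with hl hk hk
  · exact le_rfl
  · have hki : k ≤ i := hl ▸ hkl
    have := hanti k i hki
    omega
  · have hkv : k.1 = i.1 := congrArg Fin.val hk
    have hlv : l.1 ≠ i.1 := fun hc => hl (Fin.ext hc)
    have hkl' : k.1 ≤ l.1 := hkl
    have hil : i.1 + 1 ≤ l.1 := by omega
    have h1 : l.1 < d := l.isLt
    have h2 : i.1 + 1 < d := by omega
    have h3 : lam l ≤ lam ⟨i.1 + 1, h2⟩ := hanti ⟨i.1 + 1, h2⟩ l (by simp [Fin.le_def]; omega)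
    have h4 : nextPart lam i = lam ⟨i.1 + 1, h2⟩ := by unfold nextPart; rw [dif_pos h2]
    omega
  · exact hanti k l hkl

lemma update_sum (lam : Fin d → ℕ) (i : Fin d) (h : 1 ≤ lam i) :
    ∑ k, Function.update lam i (lam i - 1) k + 1 = ∑ k, lam k := by
  rw [Finset.sum_update_of_mem (Finset.mem_univ i), ← Finset.erase_eq,
    ← Finset.add_sum_erase Finset.univ lam (Finset.mem_univ i)]
  omega

lemma det_update_vanish (lam : Fin d → ℕ) (hanti : ∀ i j : Fin d, i ≤ j → lam j ≤ lam i)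
    (r : Fin d) (hrem : ¬ nextPart lam r < lam r) :
    ((hlMat lam).updateRow r
      (fun j : Fin d => invFact ((lam r : ℤ) - 1 - (r : ℤ) + (j : ℤ)))).det = 0 := by
  by_cases hr : r.1 + 1 < d
  · -- row r equals row r+1
    set r' : Fin d := ⟨r.1 + 1, hr⟩ with hr'
    have heq : lam r = lam r' := by
      have h1 : nextPart lam r = lam r' := by unfold nextPart; rw [dif_pos hr]
      have h2 : lam r' ≤ lam r := hanti r r' (by simp [hr', Fin.le_def])
      omega
    apply Matrix.det_zero_of_row_eq (i := r) (j := r')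
    · exact fun hc => by simp [hr', Fin.ext_iff] at hc
    · funext j
      rw [Matrix.updateRow_self, Matrix.updateRow_ne (by
        intro hc; simp [hr', Fin.ext_iff] at hc)]
      show invFact ((lam r : ℤ) - 1 - (r : ℤ) + (j : ℤ)) = hlMat lam r' j
      unfold hlMat
      rw [Matrix.of_apply, ← heq]
      congr 1
      have : ((r' : Fin d) : ℤ) = (r : ℤ) + 1 := by simp [hr']
      rw [this]; ring
  · -- last row; lam r = 0, row becomes zero
    have hlr : lam r = 0 := by
      have : nextPart lam r = 0 := by unfold nextPart; rw [dif_neg hr]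
      omega
    apply Matrix.det_eq_zero_of_row_eq_zero r
    intro j
    rw [Matrix.updateRow_self]
    have hj : (j : ℤ) - 1 - (r : ℤ) < 0 := by
      have h1 : j.1 < d := j.isLt
      have h2 : d ≤ r.1 + 1 := by omega
      have : j.1 ≤ r.1 := by omega
      push_cast
      omega
    show invFact ((lam r : ℤ) - 1 - (r : ℤ) + (j : ℤ)) = 0
    unfold invFact
    rw [if_neg (by rw [hlr]; push_cast; omega)]

lemma det_recurrence (lam : Fin d → ℕ) (hanti : ∀ i j : Fin d, i ≤ j → lam j ≤ lam i) :
    (∑ i, (lam i : ℚ)) * (hlMat lam).det =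
      ∑ r : Fin d, if nextPart lam r < lam r then
        (hlMat (Function.update lam r (lam r - 1))).det else 0 := by
  rw [← sum_det_update]
  refine Finset.sum_congr rfl (fun r _ => ?_)
  split_ifs with h
  · -- removable: updateRow equals hlMat of updated partition
    have hge : 1 ≤ lam r := by have : 0 ≤ nextPart lam r := Nat.zero_le _; omega
    congr 1
    funext i j
    rw [Matrix.updateRow_apply]
    by_cases hi : i = r
    · subst hi
      rw [if_pos rfl]
      show invFact _ = invFact _
      congr 1
      rw [Function.update_apply, if_pos rfl]
      push_cast [Nat.cast_sub hge]
      ring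
    · rw [if_neg hi]
      show invFact _ = invFact _
      congr 2
      rw [Function.update_apply, if_neg hi]
  · exact det_update_vanish lam hanti r h

end Glue
section Main

lemma hook_aux (d : ℕ) (n : ℕ) :
    ∀ (lam : Fin d → ℕ), (∀ i j : Fin d, i ≤ j → lam j ≤ lam i) → (∑ i, lam i = n) →
    (sytCount n (extFun lam) : ℚ) = n.factorial * (hlMat lam).det := by
  induction n with
  | zero =>
    intro lam hanti hsum
    have hlam : ∀ i, lam i = 0 := fun i =>
      Finset.sum_eq_zero_iff.mp hsum i (Finset.mem_univ i)
    have hext : extFun lam = (fun _ => 0) := by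
      funext x; unfold extFun; split <;> simp [hlam]
    rw [hext, sytCount_zero_zero]
    have htri : (hlMat lam).BlockTriangular id := by
      intro i j hij
      show invFact _ = 0
      unfold invFact
      rw [if_neg]
      have hij' : (j : ℤ) < (i : ℤ) := by
        have : (j : Fin d) < i := hij
        rw [Fin.lt_def] at this
        exact_mod_cast this
      rw [hlam i]; push_cast; omega
    rw [Matrix.det_of_upperTriangular htri]
    have hdiag : ∀ i : Fin d, hlMat lam i i = 1 := by
      intro i
      show invFact _ = 1
      have harg : ((lam i : ℤ) - (i : ℤ) + (i : ℤ)) = 0 := by rw [hlam i]; push_cast; ring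
      rw [harg]
      norm_num [invFact]
    rw [Finset.prod_congr rfl (fun i _ => hdiag i)]
    simp
  | succ n ih =>
    intro lam hanti hsum
    have hpart := extFun_isPartFun lam hanti
    rw [sytCount_succ d n (extFun lam) hpart (extFun_supp lam)]
    push_cast
    have hterm : ∀ i : Fin d,
        (if extFun lam (i.1 + 1) < extFun lam i.1 then
          (sytCount n (Function.update (extFun lam) i.1 (extFun lam i.1 - 1)) : ℚ) else 0) =
        (n.factorial : ℚ) *
          (if nextPart lam i < lam i then
            (hlMat (Function.update lam i (lam i - 1))).det else 0) := by
      intro i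
      rw [extFun_succ, extFun_coe]
      split_ifs with h
      · have hge : 1 ≤ lam i := by have := Nat.zero_le (nextPart lam i); omega
        have hupd : Function.update (extFun lam) i.1 (lam i - 1) =
            extFun (Function.update lam i (lam i - 1)) := by
          have h0 := extFun_update lam i hge
          rwa [extFun_coe] at h0
        rw [hupd]
        exact ih (Function.update lam i (lam i - 1)) (update_anti lam hanti i h)
          (by have := update_sum lam i hge; omega)
      · rw [mul_zero]
    rw [Finset.sum_congr rfl (fun i _ => hterm i), ← Finset.mul_sum,
      ← det_recurrence lam hanti]
    have hsumq : (∑ i, (lam i : ℚ)) = (n + 1 : ℚ) := by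
      rw [← Nat.cast_sum, hsum]; push_cast; ring
    rw [hsumq, Nat.factorial_succ]
    push_cast
    ring

end Main

/-- **Hook-length formula (determinant form).**  For a partition `λ` with at most
`d` parts and `n = |λ|`:  `f^λ = n! · det( 1/(λ_i - i + j)! )_{1 ≤ i,j ≤ d}`. -/
theorem hook_length_determinant (d : ℕ) (hd : 1 ≤ d) (lam : Fin d → ℕ)
    (hanti : ∀ i j : Fin d, i ≤ j → lam j ≤ lam i) :
    (sytCount (∑ i, lam i)
        (fun i => if h : i < d then lam ⟨i, h⟩ else 0) : ℚ) =
      (∑ i, lam i).factorial *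
        Matrix.det (Matrix.of fun i j : Fin d =>
          invFact ((lam i : ℤ) - (i : ℤ) + (j : ℤ))) := by
  exact hook_aux d (∑ i, lam i) lam hanti rfl
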